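/- Let P₁, …, P_m be n×n column stochastic matrices, each with strictly positive diagonal entries, and suppose the union digraph on {1, …, n} — which has a directed edge from i to j whenever (P_k)_{ji} > 0 for some k ∈ {1, …, m} and j ≠ i — is strongly connected. Then the product Q = P_m · P_{m−1} ⋯ P₁ is a column stochastic matrix with strictly positive diagonal entries, Q(j, i) > 0 whenever (P_k)_{ji} > 0 for some k, and there exists an integer p ≥ 1 such that every entry of Q^p is strictly positive. -/

import Mathlib

open Matrix

/-- An `n × n` real matrix is column stochastic if all entries are nonnegative and
each column sums to `1`. -/
def ColStoch {N : Type*} [Fintype N] (A : Matrix N N ℝ) : Prop :=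
  (∀ j i, 0 ≤ A j i) ∧ ∀ i, ∑ j, A j i = 1

lemma colStoch_one {n : ℕ} : ColStoch (1 : Matrix (Fin n) (Fin n) ℝ) := by
  constructor
  · intro j i
    by_cases h : j = i <;> simp [Matrix.one_apply, h]
  · intro i
    simp [Matrix.one_apply]

lemma colStoch_mul {n : ℕ} {A B : Matrix (Fin n) (Fin n) ℝ}
    (hA : ColStoch A) (hB : ColStoch B) : ColStoch (A * B) := by
  constructor
  · intro j i
    rw [Matrix.mul_apply]
    apply Finset.sum_nonneg
    intro x _
    exact mul_nonneg (hA.1 j x) (hB.1 x i)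
  · intro i
    simp_rw [Matrix.mul_apply]
    rw [Finset.sum_comm]
    have : ∀ x, ∑ j, A j x * B x i = B x i := by
      intro x
      rw [← Finset.sum_mul, hA.2 x, one_mul]
    simp_rw [this]
    exact hB.2 i

lemma aux_prod {n : ℕ} (L : List (Matrix (Fin n) (Fin n) ℝ))
    (h1 : ∀ A ∈ L, ColStoch A) (h2 : ∀ A ∈ L, ∀ j, 0 < A j j) :
    ColStoch L.prod ∧ (∀ j, 0 < L.prod j j) ∧
      ∀ j i, (∃ A ∈ L, 0 < A j i) → 0 < L.prod j i := by
  induction L with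
  | nil =>
    refine ⟨colStoch_one, ?_, ?_⟩
    · intro j; simp [Matrix.one_apply]
    · rintro j i ⟨A, hA, _⟩; simp at hA
  | cons A L ih =>
    have hA : ColStoch A := h1 A List.mem_cons_self
    have hAd : ∀ j, 0 < A j j := h2 A List.mem_cons_self
    obtain ⟨hLc, hLd, hLp⟩ := ih (fun B hB => h1 B (List.mem_cons_of_mem _ hB))
      (fun B hB => h2 B (List.mem_cons_of_mem _ hB))
    rw [List.prod_cons]
    have key : ∀ j i, 0 < A j i → 0 < (A * L.prod) j i := by
      intro j i h
      rw [Matrix.mul_apply]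
      apply Finset.sum_pos' (fun x _ => mul_nonneg (hA.1 j x) (hLc.1 x i))
      exact ⟨i, Finset.mem_univ i, mul_pos h (hLd i)⟩
    have key2 : ∀ j i, 0 < L.prod j i → 0 < (A * L.prod) j i := by
      intro j i h
      rw [Matrix.mul_apply]
      apply Finset.sum_pos' (fun x _ => mul_nonneg (hA.1 j x) (hLc.1 x i))
      exact ⟨j, Finset.mem_univ j, mul_pos (hAd j) h⟩
    refine ⟨colStoch_mul hA hLc, fun j => key j j (hAd j), ?_⟩
    rintro j i ⟨B, hB, hBpos⟩
    rcases List.mem_cons.mp hB with rfl | hB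
    · exact key j i hBpos
    · exact key2 j i (hLp j i ⟨B, hB, hBpos⟩)

lemma pow_pos_mono {n : ℕ} {Q : Matrix (Fin n) (Fin n) ℝ}
    (hnn : ∀ j i, 0 ≤ Q j i) (hd : ∀ j, 0 < Q j j)
    {p : ℕ} {j i : Fin n} (h : 0 < (Q ^ p) j i) (q : ℕ) (hpq : p ≤ q) :
    0 < (Q ^ q) j i := by
  have pownn : ∀ r, ∀ a b, 0 ≤ (Q ^ r) a b := by
    intro r
    induction r with
    | zero => intro a b; by_cases h : a = b <;> simp [Matrix.one_apply, h]
    | succ r ih =>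
      intro a b
      rw [pow_succ', Matrix.mul_apply]
      exact Finset.sum_nonneg fun x _ => mul_nonneg (hnn a x) (ih x b)
  induction q, hpq using Nat.le_induction with
  | base => exact h
  | succ q hq ih =>
    rw [pow_succ', Matrix.mul_apply]
    apply Finset.sum_pos' (fun x _ => mul_nonneg (hnn j x) (pownn q x i))
    exact ⟨j, Finset.mem_univ j, mul_pos (hd j) ih⟩

theorem statement10 (n m : ℕ) (hm : 1 ≤ m)
    (Ps : Fin m → Matrix (Fin n) (Fin n) ℝ)
    (hcs : ∀ k, ColStoch (Ps k))
    (hdiag : ∀ k j, 0 < Ps k j j)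
    (hsc : ∀ i j : Fin n, i ≠ j →
      Relation.TransGen (fun a b => a ≠ b ∧ ∃ k, 0 < Ps k b a) i j) :
    ColStoch (List.ofFn Ps).reverse.prod ∧
      (∀ j, 0 < (List.ofFn Ps).reverse.prod j j) ∧
      (∀ j i : Fin n, (∃ k, 0 < Ps k j i) → 0 < (List.ofFn Ps).reverse.prod j i) ∧
      ∃ p : ℕ, 1 ≤ p ∧ ∀ j i : Fin n, 0 < ((List.ofFn Ps).reverse.prod ^ p) j i := by
  set L := (List.ofFn Ps).reverse with hL
  have hmem : ∀ A ∈ L, ∃ k, A = Ps k := by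
    intro A hA
    rw [hL, List.mem_reverse, List.mem_ofFn] at hA
    obtain ⟨k, hk⟩ := hA
    exact ⟨k, hk.symm⟩
  obtain ⟨hQc, hQd, hQp⟩ := aux_prod L
    (fun A hA => by obtain ⟨k, rfl⟩ := hmem A hA; exact hcs k)
    (fun A hA => by obtain ⟨k, rfl⟩ := hmem A hA; exact hdiag k)
  set Q := L.prod with hQ
  have hedge : ∀ j i : Fin n, (∃ k, 0 < Ps k j i) → 0 < Q j i := by
    rintro j i ⟨k, hk⟩
    refine hQp j i ⟨Ps k, ?_, hk⟩
    rw [hL, List.mem_reverse, List.mem_ofFn]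
    exact ⟨k, rfl⟩
  refine ⟨hQc, hQd, hedge, ?_⟩
  have pownn : ∀ r, ∀ a b : Fin n, 0 ≤ (Q ^ r) a b := by
    intro r
    induction r with
    | zero => intro a b; by_cases hab : a = b <;> simp [Matrix.one_apply, hab]
    | succ r ihr =>
      intro a b
      rw [pow_succ', Matrix.mul_apply]
      exact Finset.sum_nonneg fun x _ => mul_nonneg (hQc.1 a x) (ihr x b)
  have step : ∀ i j : Fin n,
      Relation.TransGen (fun a b => a ≠ b ∧ ∃ k, 0 < Ps k b a) i j →
      ∃ p, 1 ≤ p ∧ 0 < (Q ^ p) j i := by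
    intro i j h
    induction h with
    | single h =>
      exact ⟨1, le_refl 1, by rw [pow_one]; exact hedge _ _ h.2⟩
    | tail _ h ih =>
      obtain ⟨p, hp1, hp⟩ := ih
      refine ⟨p + 1, le_trans hp1 (Nat.le_succ p), ?_⟩
      rw [pow_succ', Matrix.mul_apply]
      apply Finset.sum_pos' (fun x _ => mul_nonneg (hQc.1 _ _) (pownn p _ _))
      exact ⟨_, Finset.mem_univ _, mul_pos (hedge _ _ h.2) hp⟩
  have pair : ∀ i j : Fin n, ∃ p, 1 ≤ p ∧ 0 < (Q ^ p) j i := by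
    intro i j
    by_cases hij : i = j
    · subst hij
      exact ⟨1, le_refl 1, by rw [pow_one]; exact hQd i⟩
    · exact step i j (hsc i j hij)
  choose f hf1 hf2 using fun ij : Fin n × Fin n => pair ij.1 ij.2
  refine ⟨(Finset.univ.sup f) ⊔ 1, le_max_right _ _, ?_⟩
  intro j i
  exact pow_pos_mono hQc.1 hQd (hf2 (i, j))
    _ (le_trans (Finset.le_sup (Finset.mem_univ (i, j))) (le_max_left _ _))
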